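/- Local insertion of patterns into bond trees (Proposition 3.1, bond-tree case of Axiom (CA4) on Z^d): Let d ≥ 2 and let P = (P_1, P_2) be a proper pattern for bond trees on Z^d. Then there exists a finite set D of sites and bonds of Z^d with the following property: for every bond tree G on Z^d and every site y of G, there exist a bond tree G' and a vector t ∈ Z^d such that y is a site of D+t, G' contains the pattern P+t, and the sets of sites and bonds of G' lying outside D+t coincide exactly with the sets of sites and bonds of G lying outside D+t. -/

import Mathlib

open Filter

/-- A site of the `d`-dimensional hypercubic lattice. -/
abbrev Site (d : ℕ) := Fin d → ℤ

/-- A (pre)graph in `ℤ^d`: a finite set of sites together with a finite set of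
(unordered) bonds.  No conditions are imposed at this stage; this is also used as a
container for the two parts of a pattern, and for the set `D` of Axiom (CA4). -/
structure PreGraph (d : ℕ) where
  sites : Finset (Site d)
  bonds : Finset (Sym2 (Site d))

/-- `b` is a bond of the hypercubic lattice `ℤ^d`: an unordered pair `{x,y}` with
`‖x - y‖₁ = 1`. -/
def IsLatticeBond {d : ℕ} (b : Sym2 (Site d)) : Prop :=
  ∃ x y : Site d, b = s(x, y) ∧ (∑ i, |x i - y i|) = 1

/-- Adjacency inside the graph `G`. -/
def Adj {d : ℕ} (G : PreGraph d) (x y : Site d) : Prop := s(x, y) ∈ G.bonds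

/-- `G` is a (bond) animal with respect to the set of allowed lattice bonds `Bd`:
a finite nonempty connected subgraph of the lattice whose bond set is `Bd`. -/
def IsAnimalOn {d : ℕ} (Bd : Sym2 (Site d) → Prop) (G : PreGraph d) : Prop :=
  G.sites.Nonempty ∧
  (∀ b ∈ G.bonds, Bd b) ∧
  (∀ b ∈ G.bonds, ∀ x ∈ b, x ∈ G.sites) ∧
  (∀ x ∈ G.sites, ∀ y ∈ G.sites, Relation.ReflTransGen (Adj G) x y)

/-- A bond animal on the hypercubic lattice `ℤ^d`. -/
def IsBondAnimal {d : ℕ} (G : PreGraph d) : Prop := IsAnimalOn IsLatticeBond G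

/-- `G` contains a cycle: there are `n ≥ 3` distinct sites arranged cyclically with
consecutive ones joined by bonds of `G`. -/
def HasCycle {d : ℕ} (G : PreGraph d) : Prop :=
  ∃ (n : ℕ) (f : ZMod n → Site d), 3 ≤ n ∧ Function.Injective f ∧
    ∀ i : ZMod n, s(f i, f (i + 1)) ∈ G.bonds

/-- A bond tree: a bond animal containing no cycles. -/
def IsBondTree {d : ℕ} (G : PreGraph d) : Prop := IsBondAnimal G ∧ ¬ HasCycle G

/-- A site animal: a bond animal containing every lattice bond both of whose
endpoints are sites of the animal. -/
def IsSiteAnimal {d : ℕ} (G : PreGraph d) : Prop :=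
  IsBondAnimal G ∧
  ∀ b : Sym2 (Site d), IsLatticeBond b → (∀ x ∈ b, x ∈ G.sites) → b ∈ G.bonds

/-- The translateCluster `G + u`. -/
def translateCluster {d : ℕ} (G : PreGraph d) (u : Site d) : PreGraph d :=
  ⟨G.sites.image (· + u), G.bonds.image (Sym2.map (· + u))⟩

/-- `G` contains the pattern `(P₁, P₂)`: all sites and bonds of `P₁` belong to `G`,
and no site or bond of `P₂` belongs to `G`. -/
def ContainsPattern {d : ℕ} (G P₁ P₂ : PreGraph d) : Prop :=
  P₁.sites ⊆ G.sites ∧ P₁.bonds ⊆ G.bonds ∧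
  (∀ x ∈ P₂.sites, x ∉ G.sites) ∧ (∀ b ∈ P₂.bonds, b ∉ G.bonds)

/-- `(P₁, P₂)` is a pattern: `P₁` and `P₂` are (finite) disjoint sets of sites and
bonds, with `P₁` nonempty. -/
def IsPattern {d : ℕ} (P₁ P₂ : PreGraph d) : Prop :=
  (P₁.sites.Nonempty ∨ P₁.bonds.Nonempty) ∧
  Disjoint P₁.sites P₂.sites ∧ Disjoint P₁.bonds P₂.bonds

/-- `(P₁, P₂)` is a proper pattern for the class `C` of clusters: for infinitely
many `n`, some cluster in `C` of size `n` contains the pattern. -/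
def ProperFor {d : ℕ} (C : PreGraph d → Prop) (P₁ P₂ : PreGraph d) : Prop :=
  {n : ℕ | ∃ G : PreGraph d, C G ∧ G.sites.card = n ∧ ContainsPattern G P₁ P₂}.Infinite

/-- `|τ_P(G)|`: the number of translates of the pattern `(P₁, P₂)` occurring in `G`. -/
noncomputable def patternCount {d : ℕ} (P₁ P₂ G : PreGraph d) : ℕ :=
  {x : Site d | ContainsPattern G (translateCluster P₁ x) (translateCluster P₂ x)}.ncard

/-- Lexicographic (strict) order on sites. -/
def LexLt {d : ℕ} (x y : Site d) : Prop :=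
  ∃ i : Fin d, (∀ j, j < i → x j = y j) ∧ x i < y i

/-- The lexicographically smallest site of `G` is the origin. -/
def LexMinAtOrigin {d : ℕ} (G : PreGraph d) : Prop :=
  (0 : Site d) ∈ G.sites ∧ ∀ x ∈ G.sites, x = 0 ∨ LexLt 0 x

/-- `C*_n` for the class `C`: clusters in `C` of size `n` (number of sites) whose
lexicographically smallest site is the origin; one representative per translation
class. -/
def Cstar {d : ℕ} (C : PreGraph d → Prop) (n : ℕ) : Set (PreGraph d) :=
  {G | C G ∧ G.sites.card = n ∧ LexMinAtOrigin G}

open scoped ENNReal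

/-- Axiom (CA2) for an `ℝ≥0∞`-valued weight function on the class `C`. -/
def CA2 {d : ℕ} (C : PreGraph d → Prop) (wt : PreGraph d → ℝ≥0∞) : Prop :=
  ∀ m : ℕ, ∃ γ : ℝ≥0∞, γ ≠ 0 ∧ γ ≠ ⊤ ∧
    ∀ G G' : PreGraph d, C G → C G' →
      (symmDiff G.sites G'.sites).card + (symmDiff G.bonds G'.bonds).card ≤ m →
      wt G / γ ≤ wt G' ∧ wt G' ≤ γ * wt G

/-- A weight function on the class `C`: positive and finite on clusters,
translation invariant, and satisfying (CA2). -/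
def IsWeight {d : ℕ} (C : PreGraph d → Prop) (wt : PreGraph d → ℝ≥0∞) : Prop :=
  (∀ G, C G → wt G ≠ 0 ∧ wt G ≠ ⊤) ∧
  (∀ (G : PreGraph d) (u : Site d), wt (translateCluster G u) = wt G) ∧
  CA2 C wt

/-- Weighted sum of a set of clusters (`ℝ≥0∞`-valued weights). -/
noncomputable def Gsum {d : ℕ} (S : Set (PreGraph d)) (wt : PreGraph d → ℝ≥0∞) : ℝ≥0∞ :=
  ∑' G : S, wt G

/-- Weighted sum of a set of clusters (real-valued weights). -/
noncomputable def GsumR {d : ℕ} (S : Set (PreGraph d)) (f : PreGraph d → ℝ) : ℝ :=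
  ∑' G : S, f G

/-- `mono(G)`: the number of lattice bonds not in `G` with both endpoints in `G`. -/
noncomputable def monoCount {d : ℕ} (G : PreGraph d) : ℕ :=
  {b : Sym2 (Site d) | IsLatticeBond b ∧ b ∉ G.bonds ∧ ∀ x ∈ b, x ∈ G.sites}.ncard

/-- `solv(G)`: the number of lattice bonds not in `G` with exactly one endpoint in `G`. -/
noncomputable def solvCount {d : ℕ} (G : PreGraph d) : ℕ :=
  {b : Sym2 (Site d) | IsLatticeBond b ∧ b ∉ G.bonds ∧
    ∃ x y : Site d, b = s(x, y) ∧ x ∈ G.sites ∧ y ∉ G.sites}.ncard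

namespace CA4Aux

variable {d : ℕ}

/-- sup-norm bound of a site, as a natural number -/
def nb (x : Site d) : ℕ := Finset.univ.sup fun j => (x j).natAbs

lemma abs_le_nb (x : Site d) (j : Fin d) : |x j| ≤ (nb x : ℤ) := by
  have : (x j).natAbs ≤ nb x := Finset.le_sup (f := fun j => (x j).natAbs) (Finset.mem_univ j)
  rw [Int.abs_eq_natAbs]; exact_mod_cast this

/-- sup-norm bound of a bond -/
def fb : Sym2 (Site d) → ℕ :=
  Sym2.lift ⟨fun a c => max (nb a) (nb c), fun a c => max_comm _ _⟩

lemma nb_le_fb {x : Site d} {b : Sym2 (Site d)} (hx : x ∈ b) : nb x ≤ fb b := by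
  induction b using Sym2.ind with
  | _ a c =>
    rcases Sym2.mem_iff.mp hx with rfl | rfl
    · exact le_max_left _ _
    · exact le_max_right _ _

lemma sum_abs_update (z : Site d) (j : Fin d) (c : ℤ) :
    (∑ i, |Function.update z j c i - z i|) = |c - z j| := by
  rw [Fintype.sum_eq_single j]
  · rw [Function.update_self]
  · intro i hij
    rw [Function.update_of_ne hij]
    simp

/-- Move one coordinate of a site to a target value, step by step, staying in a region. -/
lemma coord_path (r : Site d → Site d → Prop) (Reg : Site d → Prop)
    (hr : ∀ u v, Reg u → Reg v → (∑ i, |u i - v i|) = 1 → r u v)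
    (z : Site d) (j : Fin d) (a : ℤ)
    (hall : ∀ c : ℤ, ((z j ≤ c ∧ c ≤ a) ∨ (a ≤ c ∧ c ≤ z j)) → Reg (Function.update z j c)) :
    Relation.ReflTransGen r z (Function.update z j a) := by
  have key : ∀ (N : ℕ) (z : Site d), (a - z j).natAbs ≤ N →
      (∀ c : ℤ, ((z j ≤ c ∧ c ≤ a) ∨ (a ≤ c ∧ c ≤ z j)) → Reg (Function.update z j c)) →
      Relation.ReflTransGen r z (Function.update z j a) := by
    intro N
    induction N with
    | zero =>
      intro z h0 _
      have : a = z j := by omega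
      subst this
      rw [Function.update_eq_self]
    | succ N ih =>
      intro z hN hall
      rcases lt_trichotomy (z j) a with hlt | heq | hgt
      · set z' := Function.update z j (z j + 1) with hz'
        have hregz : Reg z := by
          have := hall (z j) (by omega)
          rwa [Function.update_eq_self] at this
        have hregz' : Reg z' := hall (z j + 1) (by omega)
        have hstep : r z z' := by
          apply hr z z' hregz hregz'
          have : (∑ i, |z' i - z i|) = |(z j + 1) - z j| := sum_abs_update z j _
          simp at this ⊢
          rw [show (∑ i, |z i - z' i|) = ∑ i, |z' i - z i| by
            exact Finset.sum_congr rfl fun i _ => abs_sub_comm _ _]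
          simpa using this
        have hzj' : z' j = z j + 1 := Function.update_self _ _ _
        have hupd : Function.update z' j a = Function.update z j a := by
          simp [hz', Function.update_idem]
        have := ih z' (by rw [hzj']; omega) (by
          intro c hc
          rw [hz', Function.update_idem]
          exact hall c (by rw [hzj'] at hc; omega))
        rw [hupd] at this
        exact Relation.ReflTransGen.head hstep this
      · subst heq; rw [Function.update_eq_self]
      · set z' := Function.update z j (z j - 1) with hz'
        have hregz : Reg z := by
          have := hall (z j) (by omega)
          rwa [Function.update_eq_self] at this
        have hregz' : Reg z' := hall (z j - 1) (by omega)
        have hstep : r z z' := by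
          apply hr z z' hregz hregz'
          have : (∑ i, |z' i - z i|) = |(z j - 1) - z j| := sum_abs_update z j _
          rw [show (∑ i, |z i - z' i|) = ∑ i, |z' i - z i| by
            exact Finset.sum_congr rfl fun i _ => abs_sub_comm _ _]
          simpa using this
        have hzj' : z' j = z j - 1 := Function.update_self _ _ _
        have hupd : Function.update z' j a = Function.update z j a := by
          simp [hz', Function.update_idem]
        have := ih z' (by rw [hzj']; omega) (by
          intro c hc
          rw [hz', Function.update_idem]
          exact hall c (by rw [hzj'] at hc; omega))
        rw [hupd] at this
        exact Relation.ReflTransGen.head hstep this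
  exact key (a - z j).natAbs z le_rfl hall

lemma hasCycle_bonds {V V' : Finset (Site d)} {B : Finset (Sym2 (Site d))} :
    HasCycle ⟨V, B⟩ → HasCycle ⟨V', B⟩ := fun ⟨n, f, h3, hi, hb⟩ => ⟨n, f, h3, hi, hb⟩

lemma hasCycle_mono {G G' : PreGraph d} (h : G.bonds ⊆ G'.bonds) :
    HasCycle G → HasCycle G' := fun ⟨n, f, h3, hi, hb⟩ => ⟨n, f, h3, hi, fun i => h (hb i)⟩

lemma hasCycle_translate {B : Finset (Sym2 (Site d))} {V V' : Finset (Site d)} (u : Site d) :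
    HasCycle ⟨V, B.image (Sym2.map (· + u))⟩ → HasCycle ⟨V', B⟩ := by
  rintro ⟨n, f, h3, hi, hb⟩
  refine ⟨n, fun i => f i - u, h3, fun i j hij => hi (by
    have := congrArg (· + u) hij
    simpa using this), fun i => ?_⟩
  obtain ⟨b, hbB, hbeq⟩ := Finset.mem_image.mp (hb i)
  have hmap : Sym2.map (· + u) s(f i - u, f (i + 1) - u) = s(f i, f (i + 1)) := by
    rw [Sym2.map_pair_eq]; simp
  have : b = s(f i - u, f (i + 1) - u) :=
    Sym2.map.injective (add_left_injective u) (hbeq.trans hmap.symm)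
  rwa [← this]

lemma insert_cycle_path {V : Finset (Site d)} {F : Finset (Sym2 (Site d))} {u v : Site d}
    (hacyc : ¬ HasCycle ⟨V, F⟩) (hcyc : HasCycle ⟨V, insert s(u,v) F⟩) :
    Relation.ReflTransGen (fun a b => s(a,b) ∈ F) u v := by
  obtain ⟨n, f, hn3, hinj, hb⟩ := hcyc
  haveI : NeZero n := ⟨by omega⟩
  by_cases hallF : ∀ i : ZMod n, s(f i, f (i+1)) ∈ F
  · exact absurd ⟨n, f, hn3, hinj, hallF⟩ hacyc
  push_neg at hallF
  obtain ⟨i₀, hi₀⟩ := hallF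
  have heqsuv : s(f i₀, f (i₀+1)) = s(u,v) := by
    rcases Finset.mem_insert.mp (hb i₀) with h | h
    · exact h
    · exact absurd h hi₀
  have hsymmr : Symmetric (fun a b : Site d => s(a,b) ∈ F) := by
    intro a b h; rwa [Sym2.eq_swap]
  have natcast_ne : ∀ k : ℕ, 0 < k → k < n → ((k : ZMod n) ≠ 0) := by
    intro k hk0 hkn h
    rw [ZMod.natCast_eq_zero_iff] at h
    exact absurd (Nat.le_of_dvd hk0 h) (by omega)
  -- bonds at positions i₀ + 1 + k (for 1 ≤ 1+k ≤ n-1) are in F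
  have hbF : ∀ k : ℕ, 1 + k ≤ n - 1 → s(f (i₀ + 1 + (k : ZMod n)), f (i₀ + 1 + (k : ZMod n) + 1)) ∈ F := by
    intro k hk
    set j : ZMod n := i₀ + 1 + (k : ZMod n) with hj
    rcases Finset.mem_insert.mp (hb j) with h | h
    · exfalso
      have hj2 : s(f j, f (j+1)) = s(f i₀, f (i₀+1)) := h.trans heqsuv.symm
      rcases Sym2.eq_iff.mp hj2 with ⟨h1, _⟩ | ⟨h1, h2⟩
      · have : j = i₀ := hinj h1
        have : ((1 + k : ℕ) : ZMod n) = 0 := by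
          have := this
          rw [hj] at this
          push_cast
          linear_combination this - i₀ * (1 : ZMod n)
        exact natcast_ne (1+k) (by omega) (by omega) this
      · have e1 : j = i₀ + 1 := hinj h1
        have e2 : j + 1 = i₀ := hinj h2
        rw [e1] at e2
        have : ((2 : ℕ) : ZMod n) = 0 := by push_cast; linear_combination e2
        exact natcast_ne 2 (by omega) (by omega) this
    · exact h
  have chain : ∀ k : ℕ, k ≤ n - 1 →
      Relation.ReflTransGen (fun a b => s(a,b) ∈ F) (f (i₀+1)) (f (i₀+1+(k : ZMod n))) := by
    intro k
    induction k with
    | zero => intro _; simpa using Relation.ReflTransGen.refl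
    | succ k ih =>
      intro hk
      have step := hbF k (by omega)
      have : Relation.ReflTransGen (fun a b => s(a,b) ∈ F) (f (i₀+1)) (f (i₀+1+(k : ZMod n))) :=
        ih (by omega)
      refine this.tail ?_
      have : ((k+1 : ℕ) : ZMod n) = (k : ZMod n) + 1 := by push_cast; ring
      rw [this, ← add_assoc]
      exact step
  have hfin : (((n-1 : ℕ)) : ZMod n) = -1 := by
    have : ((n - 1 : ℕ) : ZMod n) = (n : ZMod n) - 1 := by
      have h1 : (1:ℕ) ≤ n := by omega
      push_cast [Nat.cast_sub h1]
      ring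
    rw [this, ZMod.natCast_self]
    ring
  have hpath : Relation.ReflTransGen (fun a b => s(a,b) ∈ F) (f (i₀+1)) (f i₀) := by
    have := chain (n-1) le_rfl
    rwa [hfin, show i₀ + 1 + (-1) = i₀ by ring] at this
  rcases Sym2.eq_iff.mp heqsuv with ⟨h1, h2⟩ | ⟨h1, h2⟩
  · rw [← h1, ← h2]
    exact (@Relation.ReflTransGen.stdSymm _ _ ⟨fun _ _ h => hsymmr h⟩).symm _ _ hpath
  · rw [← h1, ← h2]
    exact hpath

end CA4Aux

/-- **Local insertion of patterns into bond trees** (Proposition 3.1, Axiom (CA4)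
for bond trees on `ℤ^d`). -/
theorem ca4_bond_trees
    (d : ℕ) (hd : 2 ≤ d)
    (P₁ P₂ : PreGraph d) (hP : IsPattern P₁ P₂)
    (hproper : ProperFor IsBondTree P₁ P₂) :
    ∃ D : PreGraph d,
      ∀ G : PreGraph d, IsBondTree G → ∀ y ∈ G.sites,
        ∃ (G' : PreGraph d) (t : Site d),
          IsBondTree G' ∧
          y ∈ (translateCluster D t).sites ∧
          ContainsPattern G' (translateCluster P₁ t) (translateCluster P₂ t) ∧
          G'.sites \ (translateCluster D t).sites
            = G.sites \ (translateCluster D t).sites ∧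
          G'.bonds \ (translateCluster D t).bonds
            = G.bonds \ (translateCluster D t).bonds := by
  classical
  -- bounds for P₂
  set m₂ : ℕ := max (P₂.sites.sup CA4Aux.nb) (P₂.bonds.sup CA4Aux.fb) with hm₂def
  have hP₂s : ∀ x ∈ P₂.sites, ∀ j, |x j| ≤ (m₂ : ℤ) := by
    intro x hx j
    refine le_trans (CA4Aux.abs_le_nb x j) ?_
    have : CA4Aux.nb x ≤ m₂ := le_trans (Finset.le_sup hx) (le_max_left _ _)
    exact_mod_cast this
  have hP₂b : ∀ b ∈ P₂.bonds, ∀ x ∈ b, ∀ j, |x j| ≤ (m₂ : ℤ) := by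
    intro b hb x hx j
    refine le_trans (CA4Aux.abs_le_nb x j) ?_
    have : CA4Aux.nb x ≤ m₂ :=
      le_trans (le_trans (CA4Aux.nb_le_fb hx) (Finset.le_sup hb)) (le_max_right _ _)
    exact_mod_cast this
  -- pick a large tree H containing the pattern
  obtain ⟨n, hn_mem, hn_big⟩ := hproper.exists_gt ((2*m₂+1)^d)
  obtain ⟨H, hHtree, hHcard, hHP⟩ := hn_mem
  have hHanimal := hHtree.1
  have hHsitesmem : ∀ b ∈ H.bonds, ∀ x ∈ b, x ∈ H.sites := hHanimal.2.2.1
  -- global bound m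
  set mm : ℕ := max m₂ (H.sites.sup CA4Aux.nb) with hmmdef
  set m : ℤ := (mm : ℤ) with hmdef
  set R : ℤ := m + 3 with hRdef
  have hm₂m : (m₂ : ℤ) ≤ m := by
    rw [hmdef]; exact_mod_cast le_max_left _ _
  have hm0 : 0 ≤ m := by rw [hmdef]; positivity
  have hmR : m < R := by rw [hRdef]; omega
  have hHs : ∀ x ∈ H.sites, ∀ j, |x j| ≤ m := by
    intro x hx j
    refine le_trans (CA4Aux.abs_le_nb x j) ?_
    rw [hmdef]
    exact_mod_cast le_trans (Finset.le_sup hx) (le_max_right _ _)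
  -- H escapes the P₂ box
  have hesc : ∃ h ∈ H.sites, ∃ j : Fin d, (m₂ : ℤ) < |h j| := by
    by_contra hcon
    push_neg at hcon
    have hsub : H.sites ⊆ Finset.Icc (fun _ => -(m₂:ℤ)) (fun _ => (m₂:ℤ)) := by
      intro x hx
      rw [Finset.mem_Icc]
      have hxj : ∀ j, |x j| ≤ (m₂:ℤ) := hcon x hx
      exact ⟨fun j => (abs_le.mp (hxj j)).1, fun j => (abs_le.mp (hxj j)).2⟩
    have hcardIcc : (Finset.Icc (fun _ : Fin d => -(m₂:ℤ)) (fun _ => (m₂:ℤ))).card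
        = (2*m₂+1)^d := by
      rw [Pi.card_Icc]
      have hc : ∀ j : Fin d, (Finset.Icc (-(m₂:ℤ)) ((m₂:ℤ))).card = 2*m₂+1 := by
        intro _; rw [Int.card_Icc]; omega
      rw [Finset.prod_congr rfl (fun j _ => hc j), Finset.prod_const, Finset.card_univ,
        Fintype.card_fin]
    have := Finset.card_le_card hsub
    rw [hHcard, hcardIcc] at this
    omega
  obtain ⟨h, hhH, i₀, hhi⟩ := hesc
  set sg : ℤ := if 0 ≤ h i₀ then 1 else -1 with hsgdef
  have hsg : sg = 1 ∨ sg = -1 := by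
    rw [hsgdef]; split <;> simp
  have hss : sg * sg = 1 := by rcases hsg with h' | h' <;> rw [h'] <;> ring
  have habs_sg : ∀ x : ℤ, 0 < sg * x → |x| = sg * x := by
    intro x hx
    rcases hsg with h' | h' <;> rw [h'] at hx ⊢ <;> simp at hx ⊢ <;> omega
  have hsh : (m₂ : ℤ) < sg * h i₀ := by
    rw [hsgdef]; split <;> rename_i hcase
    · rw [one_mul]; rwa [abs_of_nonneg hcase] at hhi
    · rw [neg_one_mul]; rwa [abs_of_neg (by omega)] at hhi
  obtain ⟨hstar, hstarH, hstarmax⟩ :=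
    Finset.exists_max_image H.sites (fun x => sg * x i₀) ⟨h, hhH⟩
  have hstar_big : (m₂ : ℤ) < sg * hstar i₀ := lt_of_lt_of_le hsh (hstarmax h hhH)
  have hstar_le : sg * hstar i₀ ≤ m := by
    refine le_trans ?_ (hHs hstar hstarH i₀)
    rcases hsg with h' | h' <;> rw [h'] <;> simp [le_abs_self, neg_le_abs, neg_mul]
  -- the set D
  set Dsites : Finset (Site d) := Finset.Icc (fun _ => -R) (fun _ => R) with hDsdef
  set Dbonds : Finset (Sym2 (Site d)) :=
    ((Dsites ×ˢ Dsites).filter (fun p => (∑ i, |p.1 i - p.2 i|) = 1)).image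
      (fun p => s(p.1, p.2)) with hDbdef
  refine ⟨⟨Dsites, Dbonds⟩, ?_⟩
  intro G hGtree y hy
  have hGanimal := hGtree.1
  have hGsitesmem : ∀ b ∈ G.bonds, ∀ x ∈ b, x ∈ G.sites := hGanimal.2.2.1
  have hGlat : ∀ b ∈ G.bonds, IsLatticeBond b := hGanimal.2.1
  -- region predicates
  set InBox : Site d → Prop := fun z => ∀ j, |z j - y j| ≤ R with hInBoxdef
  set InSmall : Site d → Prop := fun z => ∀ j, |z j - y j| ≤ m with hInSmalldef
  set Reg : Site d → Prop := fun z => InBox z ∧ ¬ InSmall z with hRegdef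
  have hSmallBox : ∀ z, InSmall z → InBox z := by
    intro z hz j; have := hz j; omega
  -- basic membership characterizations
  have hIccOf : ∀ z, InBox z → z - y ∈ Dsites := by
    intro z hz
    rw [hDsdef, Finset.mem_Icc]
    exact ⟨fun j => (abs_le.mp (hz j)).1, fun j => (abs_le.mp (hz j)).2⟩
  have hBoxMem : ∀ z, z ∈ Dsites.image (· + y) ↔ InBox z := by
    intro z
    rw [Finset.mem_image]
    constructor
    · rintro ⟨x, hx, rfl⟩ j
      rw [hDsdef, Finset.mem_Icc] at hx
      have h1 := hx.1 j; have h2 := hx.2 j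
      show |x j + y j - y j| ≤ R
      rw [add_sub_cancel_right, abs_le]
      exact ⟨h1, h2⟩
    · intro hz
      exact ⟨z - y, hIccOf z hz, by simp⟩
  have hDbondMem : ∀ b, b ∈ Dbonds.image (Sym2.map (· + y)) ↔
      ∃ u v, b = s(u,v) ∧ (∑ i, |u i - v i|) = 1 ∧ InBox u ∧ InBox v := by
    intro b
    constructor
    · intro hb
      obtain ⟨b', hb', rfl⟩ := Finset.mem_image.mp hb
      rw [hDbdef] at hb'
      obtain ⟨⟨u, v⟩, huv, rfl⟩ := Finset.mem_image.mp hb'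
      rw [Finset.mem_filter, Finset.mem_product] at huv
      obtain ⟨⟨hu, hv⟩, hsum⟩ := huv
      refine ⟨u + y, v + y, by rw [Sym2.map_pair_eq], ?_, ?_, ?_⟩
      · simp only [Pi.add_apply, add_sub_add_right_eq_sub]
        exact hsum
      · exact (hBoxMem _).mp (Finset.mem_image.mpr ⟨u, hu, rfl⟩)
      · exact (hBoxMem _).mp (Finset.mem_image.mpr ⟨v, hv, rfl⟩)
    · rintro ⟨u, v, rfl, hsum, hu, hv⟩
      refine Finset.mem_image.mpr ⟨s(u - y, v - y), ?_, ?_⟩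
      · rw [hDbdef]
        refine Finset.mem_image.mpr ⟨(u - y, v - y), ?_, rfl⟩
        rw [Finset.mem_filter, Finset.mem_product]
        refine ⟨⟨hIccOf u hu, hIccOf v hv⟩, ?_⟩
        simp only [Pi.sub_apply, sub_sub_sub_cancel_right]
        exact hsum
      · rw [Sym2.map_pair_eq]; simp
  have hDbondAll : ∀ b ∈ Dbonds.image (Sym2.map (· + y)), ∀ x ∈ b, InBox x := by
    intro b hb x hx
    obtain ⟨u, v, rfl, -, hu, hv⟩ := (hDbondMem b).mp hb
    rcases Sym2.mem_iff.mp hx with rfl | rfl <;> assumption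
  -- the ray
  set K : ℕ := (m + 1 - sg * hstar i₀).toNat with hKdef
  have hKz : (K : ℤ) = m + 1 - sg * hstar i₀ := by
    rw [hKdef]; omega
  have hK1 : 1 ≤ K := by omega
  set aa : Site d := hstar + y with haadef
  set p : ℕ → Site d := fun k => Function.update aa i₀ (aa i₀ + sg * k) with hpdef
  have hp0 : p 0 = aa := by
    rw [hpdef]; simp
  have hpj : ∀ (k : ℕ) (j : Fin d), j ≠ i₀ → p k j = hstar j + y j := by
    intro k j hj
    rw [hpdef]; simp only [Function.update_of_ne hj]
    rw [haadef]; rfl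
  have hpi : ∀ k : ℕ, p k i₀ - y i₀ = hstar i₀ + sg * k := by
    intro k
    rw [hpdef]; simp only [Function.update_self]
    rw [haadef]; show hstar i₀ + y i₀ + sg * k - y i₀ = _; ring
  have hpi_abs : ∀ k : ℕ, |p k i₀ - y i₀| = sg * hstar i₀ + k := by
    intro k
    rw [hpi k]
    have : sg * (hstar i₀ + sg * k) = sg * hstar i₀ + k := by
      have := hss; nlinarith [hss]
    rw [habs_sg _ (by
      rw [this]
      have h0 : (0:ℤ) ≤ (m₂:ℤ) := by positivity
      have h1 : (0:ℤ) ≤ (k:ℤ) := by positivity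
      linarith [hstar_big]), this]
  have hrayBox : ∀ k : ℕ, k ≤ K → InBox (p k) := by
    intro k hk j
    rcases eq_or_ne j i₀ with rfl | hj
    · rw [hpi_abs k]
      have h1 : (k : ℤ) ≤ (K : ℤ) := by exact_mod_cast hk
      have h3 : R = m + 3 := hRdef
      linarith [hKz]
    · show |p k j - y j| ≤ R
      rw [hpj k j hj]
      have h2 : |hstar j| ≤ m := hHs hstar hstarH j
      have h3 : R = m + 3 := hRdef
      simp only [add_sub_cancel_right]
      omega
  have hrayP₂ : ∀ k : ℕ, 1 ≤ k → (m₂ : ℤ) < |p k i₀ - y i₀| := by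
    intro k hk
    rw [hpi_abs k]
    have : (1:ℤ) ≤ (k:ℤ) := by exact_mod_cast hk
    linarith
  -- the pieces of the new graph
  set outerF := G.sites.filter (fun z => ¬ InBox z) with houterdef
  set annF := (Dsites.image (· + y)).filter (fun z => ¬ InSmall z) with hanndef
  set HF := H.sites.image (· + y) with hHFdef
  set rayF := (Finset.range (K+1)).image p with hraydef
  set Ysites := outerF ∪ annF ∪ HF ∪ rayF with hYsitesdef
  set DbT := Dbonds.image (Sym2.map (· + y)) with hDbTdef
  set P₂bT := P₂.bonds.image (Sym2.map (· + y)) with hP₂bTdef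
  set Keep := G.bonds \ DbT with hKeepdef
  set HbT := H.bonds.image (Sym2.map (· + y)) with hHbTdef
  set Cand := DbT.filter (fun b => (∀ x ∈ b, x ∈ Ysites) ∧ b ∉ P₂bT) with hCanddef
  set Ybonds := Keep ∪ Cand with hYbondsdef
  set F₀ := Keep ∪ HbT with hF₀def
  -- membership facts
  have hHFsmall : ∀ x ∈ HF, InSmall x := by
    intro x hx
    obtain ⟨hh, hhmem, rfl⟩ := Finset.mem_image.mp hx
    intro j
    show |hh j + y j - y j| ≤ m
    simp only [add_sub_cancel_right]
    exact hHs hh hhmem j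
  have hP₂bTsmall : ∀ b ∈ P₂bT, ∀ x ∈ b, ∀ j, |x j - y j| ≤ (m₂ : ℤ) := by
    intro b hb x hx j
    obtain ⟨b', hb', rfl⟩ := Finset.mem_image.mp hb
    obtain ⟨x', hx', rfl⟩ := Sym2.mem_map.mp hx
    show |x' j + y j - y j| ≤ (m₂ : ℤ)
    simp only [add_sub_cancel_right]
    exact hP₂b b' hb' x' hx' j
  have hKeepOut : ∀ b ∈ Keep, ∃ u v, b = s(u,v) ∧ (∑ i, |u i - v i|) = 1 ∧
      u ∈ G.sites ∧ v ∈ G.sites ∧ ¬(InBox u ∧ InBox v) := by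
    intro b hb
    obtain ⟨hbG, hbD⟩ := Finset.mem_sdiff.mp hb
    obtain ⟨u, v, rfl, hsum⟩ := hGlat b hbG
    refine ⟨u, v, rfl, hsum, hGsitesmem _ hbG u (Sym2.mem_mk_left _ _),
      hGsitesmem _ hbG v (Sym2.mem_mk_right _ _), ?_⟩
    rintro ⟨hu, hv⟩
    exact hbD ((hDbondMem _).mpr ⟨u, v, rfl, hsum, hu, hv⟩)
  have hKeepNotSmall : ∀ b ∈ Keep, ∀ x ∈ b, ¬ InSmall x := by
    intro b hb x hx hxs
    obtain ⟨u, v, rfl, hsum, -, -, hout⟩ := hKeepOut b hb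
    have habs1 : ∀ j, |u j - v j| ≤ 1 := by
      intro j
      have hle : |u j - v j| ≤ ∑ i, |u i - v i| :=
        Finset.single_le_sum (f := fun i => |u i - v i|) (fun i _ => abs_nonneg _) (Finset.mem_univ j)
      rwa [hsum] at hle
    rcases Sym2.mem_iff.mp hx with rfl | rfl
    · refine hout ⟨hSmallBox _ hxs, fun j => ?_⟩
      have h1 := abs_le.mp (hxs j); have h2 := abs_le.mp (habs1 j)
      have h3 : R = m + 3 := hRdef
      rw [abs_le]
      omega
    · refine hout ⟨fun j => ?_, hSmallBox _ hxs⟩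
      have h1 := abs_le.mp (hxs j); have h2 := abs_le.mp (habs1 j)
      have h3 : R = m + 3 := hRdef
      rw [abs_le]
      omega
  have hYmem_ann : ∀ z, Reg z → z ∈ Ysites := by
    intro z hz
    refine Finset.mem_union_left _ (Finset.mem_union_left _ (Finset.mem_union_right _ ?_))
    exact Finset.mem_filter.mpr ⟨(hBoxMem z).mpr hz.1, hz.2⟩
  have hKeepSites : ∀ b ∈ Keep, ∀ x ∈ b, x ∈ Ysites := by
    intro b hb x hx
    have hns := hKeepNotSmall b hb x hx
    have hxG : x ∈ G.sites := by
      obtain ⟨hbG, -⟩ := Finset.mem_sdiff.mp hb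
      exact hGsitesmem _ hbG x hx
    by_cases hbox : InBox x
    · exact hYmem_ann x ⟨hbox, hns⟩
    · exact Finset.mem_union_left _ (Finset.mem_union_left _ (Finset.mem_union_left _
        (Finset.mem_filter.mpr ⟨hxG, hbox⟩)))
  have hrayY : ∀ k : ℕ, k ≤ K → p k ∈ Ysites := by
    intro k hk
    exact Finset.mem_union_right _ (Finset.mem_image.mpr
      ⟨k, Finset.mem_range.mpr (by omega), rfl⟩)
  have hHFY : ∀ x ∈ HF, x ∈ Ysites := by
    intro x hx
    exact Finset.mem_union_left _ (Finset.mem_union_right _ hx)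
  have hCandMk : ∀ u v : Site d, (∑ i, |u i - v i|) = 1 → InBox u → InBox v →
      u ∈ Ysites → v ∈ Ysites → s(u,v) ∉ P₂bT → s(u,v) ∈ Cand := by
    intro u v hsum hu hv huY hvY hnb
    refine Finset.mem_filter.mpr ⟨(hDbondMem _).mpr ⟨u, v, rfl, hsum, hu, hv⟩, ?_, hnb⟩
    intro x hx
    rcases Sym2.mem_iff.mp hx with rfl | rfl <;> assumption
  have hRegAdjC : ∀ u v, Reg u → Reg v → (∑ i, |u i - v i|) = 1 → s(u,v) ∈ Cand := by
    intro u v hu hv hsum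
    refine hCandMk u v hsum hu.1 hv.1 (hYmem_ann u hu) (hYmem_ann v hv) ?_
    intro hmem
    refine hu.2 (fun j => ?_)
    have := hP₂bTsmall _ hmem u (Sym2.mem_mk_left _ _) j
    omega
  set AdjY : Site d → Site d → Prop := fun a b => s(a,b) ∈ Ybonds with hAdjYdef
  have hRegAdj : ∀ u v, Reg u → Reg v → (∑ i, |u i - v i|) = 1 → AdjY u v := by
    intro u v hu hv hsum
    exact Finset.mem_union_right _ (hRegAdjC u v hu hv hsum)
  set CC : Site d := fun j => y j + R with hCCdef
  have hRegCC : Reg CC := by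
    have h3 : R = m + 3 := hRdef
    have h4 := hm0
    constructor
    · intro j
      show |y j + R - y j| ≤ R
      rw [show y j + R - y j = R by ring, abs_of_nonneg (by omega)]
    · intro hsm
      have h1 := hsm ⟨0, by omega⟩
      rw [hCCdef] at h1
      rw [show y ⟨0, by omega⟩ + R - y ⟨0, by omega⟩ = R by ring] at h1
      rw [abs_of_nonneg (by omega)] at h1
      omega
  
  -- raising all coordinates to the corner CC
  have hraise : ∀ (l : List (Fin d)) (w : Site d) (j : Fin d), InBox w → w j = y j + R →
      (∀ k, k ∉ l → w k = CC k) → Relation.ReflTransGen AdjY w CC := by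
    intro l
    induction l with
    | nil =>
      intro w j hw hwj hother
      have : w = CC := funext (fun k => hother k List.not_mem_nil)
      rw [this]
    | cons k l ih =>
      intro w j hw hwj hother
      have hR3 : R = m + 3 := hRdef
      have h4 := hm0
      have hpath : Relation.ReflTransGen AdjY w (Function.update w k (y k + R)) := by
        refine CA4Aux.coord_path AdjY Reg hRegAdj w k (y k + R) ?_
        intro c hc
        have h5 := abs_le.mp (hw k)
        have hcle : -R ≤ c - y k ∧ c - y k ≤ R := by
          rcases hc with ⟨h6, h7⟩ | ⟨h6, h7⟩ <;> omega
        constructor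
        · intro j'
          rcases eq_or_ne j' k with rfl | hne
          · rw [Function.update_self, abs_le]; omega
          · rw [Function.update_of_ne hne]; exact hw j'
        · intro hsm
          have hj := hsm j
          rcases eq_or_ne j k with rfl | hne
          · rw [Function.update_self] at hj
            have hceq : c = y j + R := by
              rcases hc with ⟨h6, h7⟩ | ⟨h6, h7⟩ <;> omega
            rw [hceq, show y j + R - y j = R by ring, abs_of_nonneg (by omega)] at hj
            omega
          · rw [Function.update_of_ne hne, hwj,
              show y j + R - y j = R by ring, abs_of_nonneg (by omega)] at hj
            omega
      refine hpath.trans (ih (Function.update w k (y k + R)) j ?_ ?_ ?_)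
      · intro j'
        rcases eq_or_ne j' k with rfl | hne
        · rw [Function.update_self, show y j' + R - y j' = R by ring,
            abs_of_nonneg (by omega)]
        · rw [Function.update_of_ne hne]; exact hw j'
      · rcases eq_or_ne j k with rfl | hne
        · rw [Function.update_self]
        · rw [Function.update_of_ne hne]; exact hwj
      · intro k' hk'
        rcases eq_or_ne k' k with rfl | hne
        · rw [Function.update_self, hCCdef]
        · rw [Function.update_of_ne hne]
          exact hother k' (fun hmem => (List.mem_cons.mp hmem).elim (fun h' => hne h') hk')
  -- every regular site is connected to the corner
  have hRegConn : ∀ z, Reg z → Relation.ReflTransGen AdjY z CC := by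
    intro z hz
    have hR3 : R = m + 3 := hRdef
    have h4 := hm0
    obtain ⟨j, hj⟩ : ∃ j, m < |z j - y j| := by
      by_contra hcon
      push_neg at hcon
      exact hz.2 (fun j => hcon j)
    have hbox := hz.1
    rcases lt_abs.mp hj with hpos | hneg
    · -- positive direction
      have hstep1 : Relation.ReflTransGen AdjY z (Function.update z j (y j + R)) := by
        refine CA4Aux.coord_path AdjY Reg hRegAdj z j (y j + R) ?_
        intro c hc
        have h5 := abs_le.mp (hbox j)
        have hcb : m < c - y j ∧ c - y j ≤ R := by
          rcases hc with ⟨h6, h7⟩ | ⟨h6, h7⟩ <;> omega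
        constructor
        · intro j'
          rcases eq_or_ne j' j with rfl | hne
          · rw [Function.update_self, abs_le]; omega
          · rw [Function.update_of_ne hne]; exact hbox j'
        · intro hsm
          have hjj := hsm j
          rw [Function.update_self] at hjj
          have := abs_le.mp hjj
          omega
      refine hstep1.trans (hraise (List.finRange d) _ j ?_ ?_ ?_)
      · intro j'
        rcases eq_or_ne j' j with rfl | hne
        · rw [Function.update_self, show y j' + R - y j' = R by ring,
            abs_of_nonneg (by omega)]
        · rw [Function.update_of_ne hne]; exact hbox j'
      · rw [Function.update_self]
      · intro k' hk'
        exact absurd (List.mem_finRange k') hk'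
    · -- negative direction
      haveI : Nontrivial (Fin d) := by
        refine ⟨⟨0, by omega⟩, ⟨1, by omega⟩, ?_⟩
        simp [Fin.ext_iff]
      obtain ⟨j2, hj2ne⟩ := exists_ne j
      set z1 := Function.update z j (y j - R) with hz1def
      have hz1box : InBox z1 := by
        intro j'
        rcases eq_or_ne j' j with rfl | hne
        · rw [hz1def, Function.update_self, show y j' - R - y j' = -R by ring, abs_neg,
            abs_of_nonneg (by omega)]
        · rw [hz1def, Function.update_of_ne hne]; exact hbox j'
      have hstep1 : Relation.ReflTransGen AdjY z z1 := by
        refine CA4Aux.coord_path AdjY Reg hRegAdj z j (y j - R) ?_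
        intro c hc
        have h5 := abs_le.mp (hbox j)
        have hcb : -R ≤ c - y j ∧ c - y j < -m := by
          rcases hc with ⟨h6, h7⟩ | ⟨h6, h7⟩ <;> omega
        constructor
        · intro j'
          rcases eq_or_ne j' j with rfl | hne
          · rw [Function.update_self, abs_le]; omega
          · rw [Function.update_of_ne hne]; exact hbox j'
        · intro hsm
          have hjj := hsm j
          rw [Function.update_self] at hjj
          have := abs_le.mp hjj
          omega
      set z2 := Function.update z1 j2 (y j2 + R) with hz2def
      have hz2box : InBox z2 := by
        intro j'
        rcases eq_or_ne j' j2 with rfl | hne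
        · rw [hz2def, Function.update_self, show y j' + R - y j' = R by ring,
            abs_of_nonneg (by omega)]
        · rw [hz2def, Function.update_of_ne hne]; exact hz1box j'
      have hz1j : z1 j = y j - R := by rw [hz1def, Function.update_self]
      have hstep2 : Relation.ReflTransGen AdjY z1 z2 := by
        refine CA4Aux.coord_path AdjY Reg hRegAdj z1 j2 (y j2 + R) ?_
        intro c hc
        have h5 := abs_le.mp (hz1box j2)
        have hcb : -R ≤ c - y j2 ∧ c - y j2 ≤ R := by
          rcases hc with ⟨h6, h7⟩ | ⟨h6, h7⟩ <;> omega
        constructor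
        · intro j'
          rcases eq_or_ne j' j2 with rfl | hne
          · rw [Function.update_self, abs_le]; omega
          · rw [Function.update_of_ne hne]; exact hz1box j'
        · intro hsm
          have hjj := hsm j
          rw [Function.update_of_ne (Ne.symm hj2ne), hz1j,
            show y j - R - y j = -R by ring, abs_neg, abs_of_nonneg (by omega)] at hjj
          omega
      set z3 := Function.update z2 j (y j + R) with hz3def
      have hz2j2 : z2 j2 = y j2 + R := by rw [hz2def, Function.update_self]
      have hz2j : z2 j = y j - R := by rw [hz2def, Function.update_of_ne (Ne.symm hj2ne), hz1j]
      have hz3box : InBox z3 := by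
        intro j'
        rcases eq_or_ne j' j with rfl | hne
        · rw [hz3def, Function.update_self, show y j' + R - y j' = R by ring,
            abs_of_nonneg (by omega)]
        · rw [hz3def, Function.update_of_ne hne]; exact hz2box j'
      have hstep3 : Relation.ReflTransGen AdjY z2 z3 := by
        refine CA4Aux.coord_path AdjY Reg hRegAdj z2 j (y j + R) ?_
        intro c hc
        have h5 := abs_le.mp (hz2box j)
        have hcb : -R ≤ c - y j ∧ c - y j ≤ R := by
          rcases hc with ⟨h6, h7⟩ | ⟨h6, h7⟩ <;> omega
        constructor
        · intro j'
          rcases eq_or_ne j' j with rfl | hne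
          · rw [Function.update_self, abs_le]; omega
          · rw [Function.update_of_ne hne]; exact hz2box j'
        · intro hsm
          have hjj := hsm j2
          rw [Function.update_of_ne hj2ne, hz2j2,
            show y j2 + R - y j2 = R by ring, abs_of_nonneg (by omega)] at hjj
          omega
      refine ((hstep1.trans hstep2).trans hstep3).trans
        (hraise (List.finRange d) z3 j ?_ ?_ ?_)
      · exact hz3box
      · rw [hz3def, Function.update_self]
      · intro k' hk'
        exact absurd (List.mem_finRange k') hk'
  
  -- H bonds (translated) are candidates
  have hHbTCand : ∀ b ∈ HbT, b ∈ Cand := by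
    intro b hb
    obtain ⟨b', hb', rfl⟩ := Finset.mem_image.mp hb
    obtain ⟨u, v, rfl, hsum⟩ := hHanimal.2.1 b' hb'
    have huH : u ∈ H.sites := hHsitesmem _ hb' u (Sym2.mem_mk_left _ _)
    have hvH : v ∈ H.sites := hHsitesmem _ hb' v (Sym2.mem_mk_right _ _)
    rw [Sym2.map_pair_eq]
    have husm : InSmall (u + y) := hHFsmall _ (Finset.mem_image.mpr ⟨u, huH, rfl⟩)
    have hvsm : InSmall (v + y) := hHFsmall _ (Finset.mem_image.mpr ⟨v, hvH, rfl⟩)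
    refine hCandMk _ _ ?_ (hSmallBox _ husm) (hSmallBox _ hvsm)
      (hHFY _ (Finset.mem_image.mpr ⟨u, huH, rfl⟩))
      (hHFY _ (Finset.mem_image.mpr ⟨v, hvH, rfl⟩)) ?_
    · simp only [Pi.add_apply, add_sub_add_right_eq_sub]
      exact hsum
    · intro hmem
      obtain ⟨b'', hb'', heq⟩ := Finset.mem_image.mp hmem
      have : b'' = s(u, v) := by
        apply Sym2.map.injective (add_left_injective y)
        rw [heq, Sym2.map_pair_eq]
      rw [this] at hb''
      exact hHP.2.2.2 _ hb'' hb'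
  -- ray bonds
  have hraybond : ∀ k : ℕ, k < K → AdjY (p k) (p (k+1)) := by
    intro k hk
    have hsum : (∑ i, |p k i - p (k+1) i|) = 1 := by
      have hne : ∀ j, j ≠ i₀ → p k j = p (k+1) j := fun j hj => by
        rw [hpj k j hj, hpj (k+1) j hj]
      rw [Fintype.sum_eq_single i₀ (fun j hj => by rw [hne j hj]; simp)]
      have h1 := hpi k
      have h2 : p (k+1) i₀ - y i₀ = hstar i₀ + sg * (k:ℤ) + sg := by
        rw [hpi (k+1)]; push_cast; ring
      have h3 : p k i₀ - p (k+1) i₀ = -sg := by linarith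
      rw [h3, abs_neg]
      rcases hsg with h' | h' <;> rw [h'] <;> simp
    have hnp : s(p k, p (k+1)) ∉ P₂bT := by
      intro hmem
      have h1 := hP₂bTsmall _ hmem (p (k+1)) (Sym2.mem_mk_right _ _) i₀
      have h2 := hrayP₂ (k+1) (by omega)
      linarith
    exact Finset.mem_union_right _
      (hCandMk _ _ hsum (hrayBox k (by omega)) (hrayBox (k+1) (by omega))
        (hrayY k (by omega)) (hrayY (k+1) (by omega)) hnp)
  have hrayChain : ∀ k : ℕ, k ≤ K → Relation.ReflTransGen AdjY (p k) (p K) := by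
    have main : ∀ jj : ℕ, jj ≤ K → Relation.ReflTransGen AdjY (p (K - jj)) (p K) := by
      intro jj
      induction jj with
      | zero => intro _; rw [Nat.sub_zero]
      | succ jj ih =>
        intro hjj
        have h1 : K - (jj+1) < K := by omega
        have hstep := hraybond (K - (jj+1)) h1
        have h2 : K - (jj+1) + 1 = K - jj := by omega
        rw [h2] at hstep
        exact Relation.ReflTransGen.head hstep (ih (by omega))
    intro k hk
    have hkk : k = K - (K - k) := by omega
    rw [hkk]
    exact main (K - k) (by omega)
  have hregpK : Reg (p K) := by
    refine ⟨hrayBox K le_rfl, fun hsm => ?_⟩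
    have h1 := hsm i₀
    rw [hpi_abs K] at h1
    linarith [hKz]
  -- H sites are connected to the corner
  have hHconnY : ∀ x ∈ HF, Relation.ReflTransGen AdjY x CC := by
    intro x hx
    obtain ⟨hh, hhmem, rfl⟩ := Finset.mem_image.mp hx
    have h1 : Relation.ReflTransGen AdjY (hh + y) (hstar + y) := by
      have hconn := hHanimal.2.2.2 hh hhmem hstar hstarH
      refine Relation.ReflTransGen.lift (fun x => x + y) ?_ _ _ hconn
      intro a b hab
      have hmem : Sym2.map (fun x => x + y) s(a, b) ∈ HbT :=
        Finset.mem_image.mpr ⟨s(a,b), hab, rfl⟩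
      rw [Sym2.map_pair_eq] at hmem
      exact Finset.mem_union_right _ (hHbTCand _ hmem)
    have h2 : Relation.ReflTransGen AdjY (hstar + y) (p K) := by
      have h3 := hrayChain 0 (by omega)
      rwa [hp0, haadef] at h3
    exact h1.trans (h2.trans (hRegConn _ hregpK))
  -- outer sites are connected to the corner
  have houterC : ∀ z, Relation.ReflTransGen (Adj G) y z → ¬ InBox z →
      Relation.ReflTransGen AdjY z CC := by
    intro z hz
    induction hz with
    | refl =>
      intro hbox
      refine absurd (fun j => ?_) hbox
      rw [sub_self, abs_zero]
      have := hm0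
      omega
    | @tail b c hrt hadj ih =>
      intro hboxc
      have hbond : s(b, c) ∈ G.bonds := hadj
      have hKeepmem : s(b, c) ∈ Keep := by
        refine Finset.mem_sdiff.mpr ⟨hbond, fun hmem => ?_⟩
        exact hboxc (hDbondAll _ hmem c (Sym2.mem_mk_right _ _))
      have hadjY : AdjY c b := by
        show s(c, b) ∈ Ybonds
        rw [Sym2.eq_swap]
        exact Finset.mem_union_left _ hKeepmem
      by_cases hboxb : InBox b
      · have hregb : Reg b := ⟨hboxb, hKeepNotSmall _ hKeepmem b (Sym2.mem_mk_left _ _)⟩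
        exact Relation.ReflTransGen.head hadjY (hRegConn b hregb)
      · exact Relation.ReflTransGen.head hadjY (ih hboxb)
  -- all sites of Y are connected to the corner
  have hallC : ∀ z ∈ Ysites, Relation.ReflTransGen AdjY z CC := by
    intro z hz
    rw [hYsitesdef] at hz
    rcases Finset.mem_union.mp hz with hz' | hzray
    · rcases Finset.mem_union.mp hz' with hz'' | hzH
      · rcases Finset.mem_union.mp hz'' with hzout | hzann
        · obtain ⟨hzG, hzbox⟩ := Finset.mem_filter.mp hzout
          exact houterC z (hGanimal.2.2.2 y hy z hzG) hzbox
        · obtain ⟨hzbox, hzsm⟩ := Finset.mem_filter.mp hzann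
          exact hRegConn z ⟨(hBoxMem z).mp hzbox, hzsm⟩
      · exact hHconnY z hzH
    · obtain ⟨k, hk, rfl⟩ := Finset.mem_image.mp hzray
      exact (hrayChain k (by have := Finset.mem_range.mp hk; omega)).trans
        (hRegConn _ hregpK)
  
  -- F₀ is acyclic
  have hKeepG : Keep ⊆ G.bonds := Finset.sdiff_subset
  have hHbTsmall : ∀ b ∈ HbT, ∀ x ∈ b, InSmall x := by
    intro b hb x hx
    obtain ⟨b', hb', rfl⟩ := Finset.mem_image.mp hb
    obtain ⟨x', hx', rfl⟩ := Sym2.mem_map.mp hx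
    exact hHFsmall _ (Finset.mem_image.mpr ⟨x', hHsitesmem b' hb' x' hx', rfl⟩)
  have hF₀acyc : ¬ HasCycle ⟨Ysites, F₀⟩ := by
    rintro ⟨nc, f, h3, hinj, hb⟩
    haveI : NeZero nc := ⟨by omega⟩
    by_cases hsm0 : InSmall (f 0)
    · have hallsm : ∀ k : ℕ, InSmall (f (k : ZMod nc)) := by
        intro k
        induction k with
        | zero => simpa using hsm0
        | succ k ih =>
          have hbk := hb (k : ZMod nc)
          have hcast : ((k+1 : ℕ) : ZMod nc) = (k : ZMod nc) + 1 := by push_cast; ring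
          rw [hcast]
          rcases Finset.mem_union.mp hbk with hK | hH
          · exact absurd ih (hKeepNotSmall _ hK _ (Sym2.mem_mk_left _ _))
          · exact hHbTsmall _ hH _ (Sym2.mem_mk_right _ _)
      have hallH : ∀ i : ZMod nc, s(f i, f (i+1)) ∈ HbT := by
        intro i
        rcases Finset.mem_union.mp (hb i) with hK | hH
        · exfalso
          obtain ⟨k, hk⟩ := ZMod.natCast_zmod_surjective i
          refine hKeepNotSmall _ hK (f i) (Sym2.mem_mk_left _ _) ?_
          rw [← hk]
          exact hallsm k
        · exact hH
      exact hHtree.2 (CA4Aux.hasCycle_translate (V := Ysites) (V' := H.sites) y ⟨nc, f, h3, hinj, hallH⟩)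
    · have hallnsm : ∀ k : ℕ, ¬ InSmall (f (k : ZMod nc)) := by
        intro k
        induction k with
        | zero => simpa using hsm0
        | succ k ih =>
          have hbk := hb (k : ZMod nc)
          have hcast : ((k+1 : ℕ) : ZMod nc) = (k : ZMod nc) + 1 := by push_cast; ring
          rw [hcast]
          rcases Finset.mem_union.mp hbk with hK | hH
          · exact hKeepNotSmall _ hK _ (Sym2.mem_mk_right _ _)
          · exact absurd (hHbTsmall _ hH _ (Sym2.mem_mk_left _ _)) ih
      have hallG : ∀ i : ZMod nc, s(f i, f (i+1)) ∈ G.bonds := by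
        intro i
        rcases Finset.mem_union.mp (hb i) with hK | hH
        · exact hKeepG hK
        · exfalso
          obtain ⟨k, hk⟩ := ZMod.natCast_zmod_surjective i
          refine hallnsm k ?_
          rw [hk]
          exact hHbTsmall _ hH (f i) (Sym2.mem_mk_left _ _)
      exact hGtree.2 ⟨nc, f, h3, hinj, hallG⟩
  -- a maximal acyclic subgraph
  have hF₀Y : F₀ ⊆ Ybonds := by
    intro b hb
    rcases Finset.mem_union.mp hb with hK | hH
    · exact Finset.mem_union_left _ hK
    · exact Finset.mem_union_right _ (hHbTCand _ hH)
  have hSSne : (Ybonds.powerset.filter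
      (fun F => F₀ ⊆ F ∧ ¬ HasCycle ⟨Ysites, F⟩)).Nonempty :=
    ⟨F₀, Finset.mem_filter.mpr ⟨Finset.mem_powerset.mpr hF₀Y, Finset.Subset.refl _, hF₀acyc⟩⟩
  obtain ⟨F, hFSS, hFmax⟩ : ∃ F ∈ Ybonds.powerset.filter (fun F => F₀ ⊆ F ∧ ¬ HasCycle ⟨Ysites, F⟩),
      ∀ x ∈ Ybonds.powerset.filter (fun F => F₀ ⊆ F ∧ ¬ HasCycle ⟨Ysites, F⟩), ¬ F < x := by
    obtain ⟨F, hF1, hF2⟩ := Finset.exists_maximal hSSne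
    exact ⟨F, hF1, fun x hx hlt => (not_le_of_gt hlt) (hF2 hx hlt.le)⟩
  have hFmem := Finset.mem_filter.mp hFSS
  have hFpow : F ⊆ Ybonds := Finset.mem_powerset.mp hFmem.1
  have hF₀F : F₀ ⊆ F := hFmem.2.1
  have hFacyc : ¬ HasCycle ⟨Ysites, F⟩ := hFmem.2.2
  have hadjconv : ∀ u v, AdjY u v →
      Relation.ReflTransGen (fun a b => s(a,b) ∈ F) u v := by
    intro u v huv
    by_cases hmem : s(u,v) ∈ F
    · exact Relation.ReflTransGen.single hmem
    · have hcyc : HasCycle ⟨Ysites, insert s(u,v) F⟩ := by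
        by_contra hnc
        refine hFmax (insert s(u,v) F) ?_ (Finset.ssubset_insert hmem)
        refine Finset.mem_filter.mpr ⟨Finset.mem_powerset.mpr ?_, ?_, hnc⟩
        · intro b hbmem
          rcases Finset.mem_insert.mp hbmem with rfl | hbF
          · exact huv
          · exact hFpow hbF
        · exact hF₀F.trans (Finset.subset_insert _ _)
      exact CA4Aux.insert_cycle_path hFacyc hcyc
  have hpathconv : ∀ u v, Relation.ReflTransGen AdjY u v →
      Relation.ReflTransGen (fun a b => s(a,b) ∈ F) u v := by
    intro u v huv
    induction huv with
    | refl => exact Relation.ReflTransGen.refl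
    | tail h1 h2 ih => exact ih.trans (hadjconv _ _ h2)
  have hsymmF : Symmetric (fun a b : Site d => s(a,b) ∈ F) := by
    intro a b hab
    rwa [Sym2.eq_swap]
  -- final assembly
  refine ⟨⟨Ysites, F⟩, y, ⟨⟨?_, ?_, ?_, ?_⟩, ?_⟩, ?_, ⟨?_, ?_, ?_, ?_⟩, ?_, ?_⟩
  · exact ⟨CC, hYmem_ann CC hRegCC⟩
  · -- lattice bonds
    intro b hb
    rcases Finset.mem_union.mp (hFpow hb) with hK | hC
    · exact hGlat b (hKeepG hK)
    · obtain ⟨u, v, rfl, hsum, -, -⟩ := (hDbondMem b).mp (Finset.mem_filter.mp hC).1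
      exact ⟨u, v, rfl, hsum⟩
  · -- endpoints in sites
    intro b hb x hx
    rcases Finset.mem_union.mp (hFpow hb) with hK | hC
    · exact hKeepSites _ hK x hx
    · exact (Finset.mem_filter.mp hC).2.1 x hx
  · -- connectivity
    intro x hx x' hx'
    have h1 := hpathconv _ _ (hallC x hx)
    have h2 := hpathconv _ _ (hallC x' hx')
    exact h1.trans ((@Relation.ReflTransGen.stdSymm _ _ ⟨fun _ _ h => hsymmF h⟩).symm _ _ h2)
  · exact hFacyc
  · -- y is in D + t
    show y ∈ Dsites.image (· + y)
    exact (hBoxMem y).mpr (fun j => by rw [sub_self, abs_zero]; have := hm0; omega)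
  · -- P₁ sites
    intro x hx
    obtain ⟨x', hx', rfl⟩ := Finset.mem_image.mp hx
    exact hHFY _ (Finset.mem_image.mpr ⟨x', hHP.1 hx', rfl⟩)
  · -- P₁ bonds
    intro b hb
    obtain ⟨b', hb', rfl⟩ := Finset.mem_image.mp hb
    exact hF₀F (Finset.mem_union_right _ (Finset.mem_image.mpr ⟨b', hHP.2.1 hb', rfl⟩))
  · -- P₂ sites avoided
    intro x hx hxY
    obtain ⟨x', hx', rfl⟩ := Finset.mem_image.mp hx
    have hxsm : InSmall (x' + y) := by
      intro j
      show |x' j + y j - y j| ≤ m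
      rw [add_sub_cancel_right]
      exact le_trans (hP₂s x' hx' j) hm₂m
    rcases Finset.mem_union.mp hxY with hz' | hzray
    · rcases Finset.mem_union.mp hz' with hz'' | hzH
      · rcases Finset.mem_union.mp hz'' with hzout | hzann
        · exact (Finset.mem_filter.mp hzout).2 (hSmallBox _ hxsm)
        · exact (Finset.mem_filter.mp hzann).2 hxsm
      · obtain ⟨hh, hhmem, heq⟩ := Finset.mem_image.mp hzH
        have : hh = x' := add_left_injective y heq
        rw [this] at hhmem
        exact hHP.2.2.1 x' hx' hhmem
    · obtain ⟨k, hk, heq⟩ := Finset.mem_image.mp hzray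
      rcases Nat.eq_zero_or_pos k with rfl | hkpos
      · rw [hp0, haadef] at heq
        have : hstar = x' := add_left_injective y heq
        rw [this] at hstarH
        exact hHP.2.2.1 x' hx' hstarH
      · have h1 := hrayP₂ k hkpos
        rw [heq] at h1
        have h2 : |x' i₀ + y i₀ - y i₀| ≤ (m₂:ℤ) := by
          rw [add_sub_cancel_right]
          exact hP₂s x' hx' i₀
        exact absurd h2 (not_le.mpr h1)
  · -- P₂ bonds avoided
    intro b hb hbF
    obtain ⟨b', hb', rfl⟩ := Finset.mem_image.mp hb
    have hbP₂bT : Sym2.map (fun x => x + y) b' ∈ P₂bT :=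
      Finset.mem_image.mpr ⟨b', hb', rfl⟩
    rcases Finset.mem_union.mp (hFpow hbF) with hK | hC
    · induction b' using Sym2.ind with
      | _ u v =>
        rw [Sym2.map_pair_eq] at hK hbP₂bT
        refine hKeepNotSmall _ hK (u + y) (Sym2.mem_mk_left _ _) ?_
        intro j
        have := hP₂bTsmall _ hbP₂bT (u + y) (Sym2.mem_mk_left _ _) j
        omega
    · exact (Finset.mem_filter.mp hC).2.2 hbP₂bT
  · -- site difference
    show Ysites \ Dsites.image (· + y) = G.sites \ Dsites.image (· + y)
    ext z
    simp only [Finset.mem_sdiff]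
    constructor
    · rintro ⟨hzY, hzn⟩
      refine ⟨?_, hzn⟩
      rcases Finset.mem_union.mp hzY with hz' | hzray
      · rcases Finset.mem_union.mp hz' with hz'' | hzH
        · rcases Finset.mem_union.mp hz'' with hzout | hzann
          · exact (Finset.mem_filter.mp hzout).1
          · exact absurd (Finset.mem_of_mem_filter z hzann) hzn
        · exact absurd ((hBoxMem z).mpr (hSmallBox z (hHFsmall z hzH))) hzn
      · obtain ⟨k, hk, rfl⟩ := Finset.mem_image.mp hzray
        exact absurd ((hBoxMem _).mpr
          (hrayBox k (by have := Finset.mem_range.mp hk; omega))) hzn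
    · rintro ⟨hzG, hzn⟩
      refine ⟨Finset.mem_union_left _ (Finset.mem_union_left _ (Finset.mem_union_left _
        (Finset.mem_filter.mpr ⟨hzG, fun hbox => hzn ((hBoxMem z).mpr hbox)⟩))), hzn⟩
  · -- bond difference
    show F \ DbT = G.bonds \ DbT
    ext b
    simp only [Finset.mem_sdiff]
    constructor
    · rintro ⟨hbF, hbn⟩
      rcases Finset.mem_union.mp (hFpow hbF) with hK | hC
      · exact ⟨(Finset.mem_sdiff.mp hK).1, hbn⟩
      · exact absurd (Finset.mem_of_mem_filter b hC) hbn
    · rintro ⟨hbG, hbn⟩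
      exact ⟨hF₀F (Finset.mem_union_left _ (Finset.mem_sdiff.mpr ⟨hbG, hbn⟩)), hbn⟩
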